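/- (Finite-class uniform deviation of the UU multicalibration estimator.) Let γ₁, γ₂ ∈ [0,1] with Δ := 1 − γ₁ − γ₂ ≠ 0, P_{U₁} := (1−γ₁)·P₊ + γ₁·P₋, P_{U₂} := γ₂·P₊ + (1−γ₂)·P₋, α₁(v) := ((1−γ₂)·π₊·(1−v) + γ₂·π₋·v)/Δ, α₂(v) := (−γ₁·π₊·(1−v) − (1−γ₁)·π₋·v)/Δ, and A_k := sup_{v ∈ [0,1]} |α_k(v)| for k = 1,2. Let 𝒞 be a nonempty finite set of measurable functions c : 𝒳 → [−1,1], 𝒲 a nonempty finite set of measurable functions w : [0,1] → [−1,1], f : 𝒳 → [0,1] measurable, n₁, n₂ ≥ 1, δ ∈ (0,1). For s¹ ∈ 𝒳^{n₁}, s² ∈ 𝒳^{n₂} define Ĥ_{c,w}(s¹, s²) := Σ_{k=1}^{2} (1/n_k)·Σ_{i=1}^{n_k} α_k(f(s^k_i))·c(s^k_i)·w(f(s^k_i)). Then under the product measure P_{U₁}^{⊗ n₁} ⊗ P_{U₂}^{⊗ n₂}, with probability at least 1 − δ, max_{c ∈ 𝒞, w ∈ 𝒲} |Ĥ_{c,w}(s¹,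 s²) − R_{c,w}(f)| ≤ A₁·√(2·log(4·|𝒞|·|𝒲|/δ)/n₁) + A₂·√(2·log(4·|𝒞|·|𝒲|/δ)/n₂). -/

import Mathlib

open Real MeasureTheory ProbabilityTheory

private noncomputable def Dfun (r u : ℝ) : ℝ := ((1+r)*Real.exp u + (1-r)*Real.exp (-u))/2
private noncomputable def Dfun' (r u : ℝ) : ℝ := ((1+r)*Real.exp u - (1-r)*Real.exp (-u))/2
private noncomputable def psiF (r u : ℝ) : ℝ := r*u + u^2/2 - Real.log (Dfun r u)
private noncomputable def psiF' (r u : ℝ) : ℝ := r + u - Dfun' r u / Dfun r u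

private lemma Dfun_pos {r : ℝ} (hr : |r| ≤ 1) (u : ℝ) : 0 < Dfun r u := by
  rw [abs_le] at hr
  have h1 := exp_pos u
  have h2 := exp_pos (-u)
  unfold Dfun
  rcases le_or_gt r 0 with h | h
  · nlinarith
  · nlinarith

private lemma Dfun_sq {r : ℝ} (u : ℝ) : 1 - r^2 ≤ (Dfun r u)^2 := by
  have h : Real.exp u * Real.exp (-u) = 1 := by
    rw [← Real.exp_add]; simp
  unfold Dfun
  nlinarith [sq_nonneg ((1+r)*Real.exp u - (1-r)*Real.exp (-u))]

private lemma hasDerivAt_Dfun (r u : ℝ) : HasDerivAt (Dfun r) (Dfun' r u) u := by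
  unfold Dfun Dfun'
  have h1 : HasDerivAt (fun u : ℝ => Real.exp u) (Real.exp u) u := Real.hasDerivAt_exp u
  have h2 : HasDerivAt (fun u : ℝ => Real.exp (-u)) (-Real.exp (-u)) u := by
    simpa [Function.comp_def] using (Real.hasDerivAt_exp (-u)).comp u (hasDerivAt_neg u)
  exact (((h1.const_mul (1+r)).add (h2.const_mul (1-r))).div_const 2).congr_deriv (by ring)

private lemma hasDerivAt_Dfun' (r u : ℝ) : HasDerivAt (Dfun' r) (Dfun r u) u := by
  unfold Dfun Dfun'
  have h1 : HasDerivAt (fun u : ℝ => Real.exp u) (Real.exp u) u := Real.hasDerivAt_exp u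
  have h2 : HasDerivAt (fun u : ℝ => Real.exp (-u)) (-Real.exp (-u)) u := by
    simpa [Function.comp_def] using (Real.hasDerivAt_exp (-u)).comp u (hasDerivAt_neg u)
  exact (((h1.const_mul (1+r)).sub (h2.const_mul (1-r))).div_const 2).congr_deriv (by ring)

private lemma hasDerivAt_psiF {r : ℝ} (hr : |r| ≤ 1) (u : ℝ) :
    HasDerivAt (psiF r) (psiF' r u) u := by
  unfold psiF psiF'
  have hD := hasDerivAt_Dfun r u
  have hlog : HasDerivAt (fun u => Real.log (Dfun r u)) (Dfun' r u / Dfun r u) u := by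
    simpa [div_eq_mul_inv, mul_comm, Function.comp_def] using (Real.hasDerivAt_log (Dfun_pos hr u).ne').comp u hD
  have hpoly : HasDerivAt (fun u : ℝ => r*u + u^2/2) (r + u) u := by
    have : HasDerivAt (fun u : ℝ => r*u + u^2/2) (r*1 + (2*u^1)/2) u :=
      ((hasDerivAt_id u).const_mul r).add ((hasDerivAt_pow 2 u).div_const 2)
    simpa using this
  exact hpoly.sub hlog

private lemma hasDerivAt_psiF' {r : ℝ} (hr : |r| ≤ 1) (u : ℝ) :
    HasDerivAt (psiF' r) (1 - (1 - r^2)/(Dfun r u)^2) u := by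
  unfold psiF'
  have hD := hasDerivAt_Dfun r u
  have hD' := hasDerivAt_Dfun' r u
  have hpos := Dfun_pos hr u
  have hdiv : HasDerivAt (fun u => Dfun' r u / Dfun r u)
      ((Dfun r u * Dfun r u - Dfun' r u * Dfun' r u) / (Dfun r u)^2) u :=
    hD'.div hD hpos.ne'
  have hkey : Dfun r u * Dfun r u - Dfun' r u * Dfun' r u = 1 - r^2 := by
    unfold Dfun Dfun'
    have h : Real.exp u * Real.exp (-u) = 1 := by rw [← Real.exp_add]; simp
    nlinarith
  have : HasDerivAt (fun u => r + u - Dfun' r u / Dfun r u)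
      (0 + 1 - (Dfun r u * Dfun r u - Dfun' r u * Dfun' r u) / (Dfun r u)^2) u :=
    ((hasDerivAt_const u r).add (hasDerivAt_id u)).sub hdiv
  simpa [hkey] using this

private lemma psiF'_deriv_nonneg {r : ℝ} (hr : |r| ≤ 1) (u : ℝ) :
    0 ≤ 1 - (1 - r^2)/(Dfun r u)^2 := by
  have hpos := Dfun_pos hr u
  have hsq := Dfun_sq (r := r) u
  have h2 : (0:ℝ) < (Dfun r u)^2 := by positivity
  have : (1 - r^2)/(Dfun r u)^2 ≤ 1 := by
    rw [div_le_one h2]; exact hsq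
  linarith

private lemma psiF'_mono {r : ℝ} (hr : |r| ≤ 1) : Monotone (psiF' r) := by
  apply monotone_of_deriv_nonneg
  · exact fun u => (hasDerivAt_psiF' hr u).differentiableAt
  · intro u
    rw [(hasDerivAt_psiF' hr u).deriv]
    exact psiF'_deriv_nonneg hr u

private lemma psiF_zero (r : ℝ) : psiF r 0 = 0 := by
  unfold psiF Dfun; simp

private lemma psiF'_zero (r : ℝ) : psiF' r 0 = 0 := by
  unfold psiF' Dfun Dfun'; simp

private lemma psiF_nonneg {r : ℝ} (hr : |r| ≤ 1) (u : ℝ) : 0 ≤ psiF r u := by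
  rcases le_or_gt 0 u with h | h
  · have hm : MonotoneOn (psiF r) (Set.Ici 0) := by
      apply monotoneOn_of_deriv_nonneg (convex_Ici 0)
      · exact (Continuous.continuousOn (by
          exact continuous_iff_continuousAt.2 fun u => (hasDerivAt_psiF hr u).continuousAt))
      · intro x _
        exact ((hasDerivAt_psiF hr x).differentiableAt).differentiableWithinAt
      · intro x hx
        rw [(hasDerivAt_psiF hr x).deriv]
        have := psiF'_mono hr (le_of_lt (by simpa using hx) : (0:ℝ) ≤ x)
        rw [psiF'_zero] at this
        exact this
    have := hm (Set.self_mem_Ici) (Set.mem_Ici.2 h) h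
    rwa [psiF_zero] at this
  · have hm : AntitoneOn (psiF r) (Set.Iic 0) := by
      apply antitoneOn_of_deriv_nonpos (convex_Iic 0)
      · exact (Continuous.continuousOn (by
          exact continuous_iff_continuousAt.2 fun u => (hasDerivAt_psiF hr u).continuousAt))
      · intro x _
        exact ((hasDerivAt_psiF hr x).differentiableAt).differentiableWithinAt
      · intro x hx
        rw [(hasDerivAt_psiF hr x).deriv]
        have := psiF'_mono hr (le_of_lt (by simpa using hx) : x ≤ (0:ℝ))
        rw [psiF'_zero] at this
        exact this
    have := hm (Set.mem_Iic.2 h.le) (Set.self_mem_Iic) h.le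
    rwa [psiF_zero] at this

/-- Core mgf bound: `((1+r)eᵘ+(1-r)e⁻ᵘ)/2 ≤ exp (r u + u²/2)` for `|r| ≤ 1`. -/
private lemma core_mgf_bound {r : ℝ} (hr : |r| ≤ 1) (u : ℝ) :
    ((1+r)*Real.exp u + (1-r)*Real.exp (-u))/2 ≤ Real.exp (r*u + u^2/2) := by
  have h := psiF_nonneg hr u
  unfold psiF at h
  have hpos := Dfun_pos hr u
  have h2 : Real.log (Dfun r u) ≤ r*u + u^2/2 := by linarith
  have h3 : Dfun r u ≤ Real.exp (r*u + u^2/2) := by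
    calc Dfun r u = Real.exp (Real.log (Dfun r u)) := (Real.exp_log hpos).symm
    _ ≤ _ := Real.exp_le_exp.2 h2
  unfold Dfun at h3
  exact h3


private lemma integrable_of_bounded {Ω : Type*} [MeasurableSpace Ω] {μ : Measure Ω}
    [IsFiniteMeasure μ] {g : Ω → ℝ} (hg : Measurable g) {B : ℝ} (hb : ∀ x, |g x| ≤ B) :
    Integrable g μ := by
  refine (integrable_const B).mono' hg.aestronglyMeasurable ?_
  exact Filter.Eventually.of_forall fun x => by simpa using hb x

private lemma chord_bound {A lam y : ℝ} (hA : 0 < A) (hy : |y| ≤ A) :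
    Real.exp (lam * y) ≤ ((A - y) * Real.exp (-(lam*A)) + (A + y) * Real.exp (lam*A)) / (2*A) := by
  rw [abs_le] at hy
  have h := convexOn_exp.2 (Set.mem_univ (-(lam*A))) (Set.mem_univ (lam*A))
    (show (0:ℝ) ≤ (A - y)/(2*A) from div_nonneg (by linarith [hy.2]) (by linarith))
    (show (0:ℝ) ≤ (A + y)/(2*A) from div_nonneg (by linarith [hy.1]) (by linarith))
    (show (A - y)/(2*A) + (A + y)/(2*A) = 1 by field_simp; ring)
  simp only [smul_eq_mul] at h
  have harg : (A - y)/(2*A) * (-(lam*A)) + (A + y)/(2*A) * (lam*A) = lam * y := by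
    field_simp; ring
  rw [harg] at h
  refine h.trans_eq ?_
  field_simp

/-- Hoeffding-type mgf bound for a bounded random variable. -/
private lemma mgf_bdd {Ω : Type*} [MeasurableSpace Ω] (μ : Measure Ω)
    [IsProbabilityMeasure μ] {g : Ω → ℝ} (hg : Measurable g) {A : ℝ} (hA : 0 < A)
    (hb : ∀ x, |g x| ≤ A) (lam : ℝ) :
    ∫ x, Real.exp (lam * g x) ∂μ
      ≤ Real.exp (lam * (∫ x, g x ∂μ) + lam^2 * A^2 / 2) := by
  set m := ∫ x, g x ∂μ with hm
  have hgint : Integrable g μ := integrable_of_bounded hg hb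
  have hmabs : |m| ≤ A := by
    have := norm_integral_le_of_norm_le_const (μ := μ) (f := g) (C := A)
      (Filter.Eventually.of_forall fun x => by simpa using hb x)
    simpa using this
  have hexpint : Integrable (fun x => Real.exp (lam * g x)) μ := by
    refine integrable_of_bounded ((measurable_exp.comp (hg.const_mul lam))) (B := Real.exp (|lam| * A)) ?_
    intro x
    rw [abs_of_pos (Real.exp_pos _)]
    apply Real.exp_le_exp.2
    calc lam * g x ≤ |lam * g x| := le_abs_self _
    _ = |lam| * |g x| := abs_mul _ _
    _ ≤ |lam| * A := by
        exact mul_le_mul_of_nonneg_left (hb x) (abs_nonneg _)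
  have hboundint : Integrable
      (fun x => ((A - g x) * Real.exp (-(lam*A)) + (A + g x) * Real.exp (lam*A)) / (2*A)) μ := by
    apply Integrable.div_const
    exact (((integrable_const A).sub hgint).mul_const _).add (((integrable_const A).add hgint).mul_const _)
  have step1 : ∫ x, Real.exp (lam * g x) ∂μ
      ≤ ((A - m) * Real.exp (-(lam*A)) + (A + m) * Real.exp (lam*A)) / (2*A) := by
    have hmono := integral_mono hexpint hboundint (fun x => chord_bound hA (hb x))
    refine hmono.trans_eq ?_
    have heq2 : ∀ x : Ω, ((A - g x) * Real.exp (-(lam*A)) + (A + g x) * Real.exp (lam*A)) / (2*A)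
        = (A * Real.exp (-(lam*A)) + A * Real.exp (lam*A))/(2*A)
          + g x * ((Real.exp (lam*A) - Real.exp (-(lam*A)))/(2*A)) := by
      intro x; field_simp; ring
    rw [integral_congr_ae (Filter.Eventually.of_forall heq2),
      integral_add (integrable_const _) (hgint.mul_const _),
      integral_const, integral_mul_const]
    simp only [probReal_univ, one_smul, ← hm]
    field_simp
    ring
  refine step1.trans ?_
  have hr : |m / A| ≤ 1 := by
    rw [abs_div, abs_of_pos hA, div_le_one hA]
    exact hmabs
  have := core_mgf_bound hr (lam * A)
  have heq : ((A - m) * Real.exp (-(lam*A)) + (A + m) * Real.exp (lam*A)) / (2*A)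
      = ((1 + m/A) * Real.exp (lam*A) + (1 - m/A) * Real.exp (-(lam*A))) / 2 := by
    field_simp
    ring
  rw [heq]
  refine this.trans_eq ?_
  congr 1
  field_simp


/-- One-sided Hoeffding bound for the mean of iid bounded variables. -/
private lemma hoeffding_pi {Ω : Type*} [MeasurableSpace Ω] (μ : Measure Ω)
    [IsProbabilityMeasure μ] {g : Ω → ℝ} (hg : Measurable g) {A : ℝ} (hA : 0 < A)
    (hb : ∀ x, |g x| ≤ A) (n : ℕ) (hn : 1 ≤ n) {t : ℝ} (ht : 0 ≤ t) :
    (Measure.pi fun _ : Fin n => μ) {s | (∫ x, g x ∂μ) + t ≤ (1 / n) * ∑ i, g (s i)}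
      ≤ ENNReal.ofReal (Real.exp (-(n * t^2 / (2 * A^2)))) := by
  set m := ∫ x, g x ∂μ with hm
  have hnpos : (0:ℝ) < n := by exact_mod_cast hn
  set lam := t / A^2 with hlam
  have hlam0 : 0 ≤ lam := div_nonneg ht (by positivity)
  set Pn := Measure.pi fun _ : Fin n => μ with hPn
  haveI : IsProbabilityMeasure Pn := by rw [hPn]; infer_instance
  set Xs : (Fin n → Ω) → ℝ := fun s => ∑ i, g (s i) with hXs
  have hXmeas : Measurable Xs := by
    apply Finset.measurable_sum
    intro i _
    exact hg.comp (measurable_pi_apply i)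
  have hXbd : ∀ s, |Xs s| ≤ n * A := by
    intro s
    calc |∑ i, g (s i)| ≤ ∑ i : Fin n, |g (s i)| := Finset.abs_sum_le_sum_abs _ _
    _ ≤ ∑ _i : Fin n, A := Finset.sum_le_sum fun i _ => hb (s i)
    _ = n * A := by simp [mul_comm]
  have hint : Integrable (fun s => Real.exp (lam * Xs s)) Pn := by
    refine integrable_of_bounded (measurable_exp.comp (hXmeas.const_mul lam))
      (B := Real.exp (|lam| * (n * A))) ?_
    intro s
    rw [abs_of_pos (Real.exp_pos _)]
    apply Real.exp_le_exp.2
    calc lam * Xs s ≤ |lam * Xs s| := le_abs_self _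
    _ = |lam| * |Xs s| := abs_mul _ _
    _ ≤ |lam| * (n * A) := mul_le_mul_of_nonneg_left (hXbd s) (abs_nonneg _)
  have hchern := measure_ge_le_exp_mul_mgf (μ := Pn) (X := Xs) (n * (m + t)) hlam0 hint
  -- compute/bound the mgf
  have hmgf : mgf Xs Pn lam ≤ Real.exp (n * (lam * m + lam^2 * A^2 / 2)) := by
    have hprod : mgf Xs Pn lam = (∫ x, Real.exp (lam * g x) ∂μ) ^ n := by
      letI : MeasureSpace Ω := ⟨μ⟩
      have hvol : Pn = (volume : Measure (Fin n → Ω)) := by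
        rw [hPn, MeasureTheory.volume_pi]; rfl
      rw [mgf, hvol]
      have : ∀ s : Fin n → Ω, Real.exp (lam * Xs s) = ∏ i, Real.exp (lam * g (s i)) := by
        intro s
        rw [hXs, Finset.mul_sum, Real.exp_sum]
      calc ∫ s, Real.exp (lam * Xs s) = ∫ s : Fin n → Ω, ∏ i, Real.exp (lam * g (s i)) := by
            exact integral_congr_ae (Filter.Eventually.of_forall this)
      _ = (∫ x, Real.exp (lam * g x)) ^ (Fintype.card (Fin n)) :=
            MeasureTheory.integral_fintype_prod_eq_pow (ι := Fin n) (fun x => Real.exp (lam * g x))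
      _ = _ := by rw [Fintype.card_fin]; rfl
    rw [hprod]
    calc (∫ x, Real.exp (lam * g x) ∂μ) ^ n
        ≤ (Real.exp (lam * m + lam^2 * A^2 / 2)) ^ n := by
          apply pow_le_pow_left₀ (integral_nonneg fun x => (Real.exp_pos _).le)
          exact mgf_bdd μ hg hA hb lam
    _ = Real.exp (n * (lam * m + lam^2 * A^2 / 2)) := by
          rw [← Real.exp_nat_mul]
  -- combine
  have hreal : (Pn {s | n * (m + t) ≤ Xs s}).toReal ≤ Real.exp (-(n * t^2 / (2 * A^2))) := by
    refine hchern.trans ?_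
    calc Real.exp (-lam * (n * (m + t))) * mgf Xs Pn lam
        ≤ Real.exp (-lam * (n * (m + t))) * Real.exp (n * (lam * m + lam^2 * A^2 / 2)) := by
          exact mul_le_mul_of_nonneg_left hmgf (Real.exp_pos _).le
    _ = Real.exp (-lam * (n * (m + t)) + n * (lam * m + lam^2 * A^2 / 2)) := by
          rw [← Real.exp_add]
    _ = Real.exp (-(n * t^2 / (2 * A^2))) := by
          congr 1
          rw [hlam]
          field_simp
          ring
  have hset : {s : Fin n → Ω | m + t ≤ (1 / n) * ∑ i, g (s i)} = {s | n * (m + t) ≤ Xs s} := by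
    ext s
    simp only [Set.mem_setOf_eq, hXs]
    rw [one_div, inv_mul_eq_div, le_div_iff₀ hnpos, mul_comm]
  rw [hset]
  rw [← ENNReal.ofReal_toReal (measure_ne_top Pn _)]
  exact ENNReal.ofReal_le_ofReal hreal


/-- Two-sided Hoeffding for the empirical mean. -/
private lemma hoeffding_abs {Ω : Type*} [MeasurableSpace Ω] (μ : Measure Ω)
    [IsProbabilityMeasure μ] {g : Ω → ℝ} (hg : Measurable g) {A : ℝ} (hA : 0 < A)
    (hb : ∀ x, |g x| ≤ A) (n : ℕ) (hn : 1 ≤ n) {t : ℝ} (ht : 0 ≤ t) :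
    (Measure.pi fun _ : Fin n => μ) {s | t < |(1 / n) * ∑ i, g (s i) - ∫ x, g x ∂μ|}
      ≤ ENNReal.ofReal (Real.exp (-(n * t^2 / (2 * A^2))))
        + ENNReal.ofReal (Real.exp (-(n * t^2 / (2 * A^2)))) := by
  have hgneg : Measurable (fun x => -g x) := hg.neg
  have hbneg : ∀ x, |(-g x)| ≤ A := fun x => by rw [abs_neg]; exact hb x
  have hsub : {s : Fin n → Ω | t < |(1 / n : ℝ) * ∑ i, g (s i) - ∫ x, g x ∂μ|}
      ⊆ {s | (∫ x, g x ∂μ) + t ≤ (1 / n) * ∑ i, g (s i)}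
        ∪ {s | (∫ x, (-g x) ∂μ) + t ≤ (1 / n) * ∑ i, (-g (s i))} := by
    intro s hs
    simp only [Set.mem_setOf_eq] at hs
    rcases lt_abs.1 hs with h | h
    · left
      simp only [Set.mem_setOf_eq]
      linarith
    · right
      simp only [Set.mem_setOf_eq, integral_neg]
      have : (1 / n : ℝ) * ∑ i, (-g (s i)) = -((1 / n : ℝ) * ∑ i, g (s i)) := by
        rw [Finset.sum_neg_distrib]; ring
      rw [this]
      linarith
  calc (Measure.pi fun _ : Fin n => μ) {s | t < |(1 / n : ℝ) * ∑ i, g (s i) - ∫ x, g x ∂μ|}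
      ≤ (Measure.pi fun _ : Fin n => μ)
        ({s | (∫ x, g x ∂μ) + t ≤ (1 / n : ℝ) * ∑ i, g (s i)}
          ∪ {s | (∫ x, (-g x) ∂μ) + t ≤ (1 / n : ℝ) * ∑ i, (-g (s i))}) := measure_mono hsub
  _ ≤ _ := by
      refine (measure_union_le _ _).trans ?_
      exact add_le_add (hoeffding_pi μ hg hA hb n hn ht) (hoeffding_pi μ hgneg hA hbneg n hn ht)

/-- Integral against a two-component mixture. -/
private lemma mix_integral {Ω : Type*} [MeasurableSpace Ω] (P Q : Measure Ω)
    [IsProbabilityMeasure P] [IsProbabilityMeasure Q] {a b : ℝ} (ha : 0 ≤ a) (hb : 0 ≤ b)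
    {g : Ω → ℝ} (hg : Measurable g) {B : ℝ} (hbd : ∀ x, |g x| ≤ B) :
    ∫ x, g x ∂(ENNReal.ofReal a • P + ENNReal.ofReal b • Q)
      = a * ∫ x, g x ∂P + b * ∫ x, g x ∂Q := by
  haveI : IsFiniteMeasure (ENNReal.ofReal a • P) := by
    constructor
    rw [Measure.smul_apply, smul_eq_mul, measure_univ, mul_one]
    exact ENNReal.ofReal_lt_top
  haveI : IsFiniteMeasure (ENNReal.ofReal b • Q) := by
    constructor
    rw [Measure.smul_apply, smul_eq_mul, measure_univ, mul_one]
    exact ENNReal.ofReal_lt_top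
  rw [integral_add_measure (integrable_of_bounded hg hbd) (integrable_of_bounded hg hbd),
    integral_smul_measure, integral_smul_measure]
  simp [ENNReal.toReal_ofReal ha, ENNReal.toReal_ofReal hb]


/-- Deviation bound for one sample, including the degenerate `A = 0` case. -/
private lemma sample_bound {Ω : Type*} [MeasurableSpace Ω] (μ : Measure Ω)
    [IsProbabilityMeasure μ] {g : Ω → ℝ} (hg : Measurable g) {A : ℝ} (hA0 : 0 ≤ A)
    (hb : ∀ x, |g x| ≤ A) (n : ℕ) (hn : 1 ≤ n) {L : ℝ} (hL : 0 ≤ L) {D : ℝ}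
    (hD : Real.exp (-L) = D) :
    (Measure.pi fun _ : Fin n => μ)
        {s | A * Real.sqrt (2 * L / n) < |(1 / n) * ∑ i, g (s i) - ∫ x, g x ∂μ|}
      ≤ ENNReal.ofReal D + ENNReal.ofReal D := by
  have hnR : (0:ℝ) < n := by exact_mod_cast hn
  rcases hA0.eq_or_lt with hA | hA
  · -- A = 0 : g vanishes identically and the event is empty
    have hg0 : ∀ x, g x = 0 := fun x => abs_nonpos_iff.1 ((hb x).trans_eq hA.symm)
    have hempty : {s : Fin n → Ω | A * Real.sqrt (2 * L / n)
        < |(1 / n : ℝ) * ∑ i, g (s i) - ∫ x, g x ∂μ|} = ∅ := by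
      apply Set.eq_empty_iff_forall_notMem.2
      intro s hs
      simp only [Set.mem_setOf_eq] at hs
      have h1 : ∑ i, g (s i) = 0 := Finset.sum_eq_zero fun i _ => hg0 (s i)
      have h2 : ∫ x, g x ∂μ = 0 := by
        rw [integral_congr_ae (Filter.Eventually.of_forall hg0), integral_zero]
      rw [h1, h2, ← hA] at hs
      simp at hs
    rw [hempty]
    simp
  · -- A > 0 : genuine Hoeffding bound
    have hsq : (0:ℝ) ≤ 2 * L / n := by positivity
    have ht : 0 ≤ A * Real.sqrt (2 * L / n) := mul_nonneg hA.le (Real.sqrt_nonneg _)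
    refine (hoeffding_abs μ hg hA hb n hn ht).trans ?_
    have hcalc : -(n * (A * Real.sqrt (2 * L / n))^2 / (2 * A^2)) = -L := by
      rw [mul_pow, Real.sq_sqrt hsq]
      field_simp
    rw [hcalc, hD]
open MeasureTheory

set_option maxHeartbeats 1000000 in
/-- Finite-class uniform deviation of the empirical UU multicalibration
estimator: with probability at least `1 − δ` over the two unlabeled samples,
the corrected empirical moments are uniformly close to the population
moments `R_{c,w}(f)`. -/
theorem uu_finite_class_uniform_deviation {X : Type*} [MeasurableSpace X]
    (Pp Pm : Measure X) [IsProbabilityMeasure Pp] [IsProbabilityMeasure Pm]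
    (pip : ℝ) (hpi : pip ∈ Set.Icc (0:ℝ) 1)
    (γ1 γ2 : ℝ) (hγ1 : γ1 ∈ Set.Icc (0:ℝ) 1) (hγ2 : γ2 ∈ Set.Icc (0:ℝ) 1)
    (hΔ : 1 - γ1 - γ2 ≠ 0)
    (C : Finset (X → ℝ)) (W : Finset (ℝ → ℝ))
    (hCne : C.Nonempty) (hWne : W.Nonempty)
    (hC : ∀ c ∈ C, Measurable c ∧ ∀ x, c x ∈ Set.Icc (-1:ℝ) 1)
    (hW : ∀ w ∈ W, Measurable w ∧ ∀ v ∈ Set.Icc (0:ℝ) 1, w v ∈ Set.Icc (-1:ℝ) 1)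
    (f : X → ℝ) (hf : Measurable f) (hf01 : ∀ x, f x ∈ Set.Icc (0:ℝ) 1)
    (n1 n2 : ℕ) (hn1 : 1 ≤ n1) (hn2 : 1 ≤ n2)
    (δ : ℝ) (hδ : δ ∈ Set.Ioo (0:ℝ) 1) :
    ENNReal.ofReal (1 - δ) ≤
      ((Measure.pi fun _ : Fin n1 =>
          ENNReal.ofReal (1 - γ1) • Pp + ENNReal.ofReal γ1 • Pm).prod
        (Measure.pi fun _ : Fin n2 =>
          ENNReal.ofReal γ2 • Pp + ENNReal.ofReal (1 - γ2) • Pm))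
      {s : (Fin n1 → X) × (Fin n2 → X) |
        ∀ c ∈ C, ∀ w ∈ W,
          |((1 / n1 * ∑ i, ((1 - γ2) * pip * (1 - f (s.1 i)) + γ2 * (1 - pip) * f (s.1 i))
                / (1 - γ1 - γ2) * (c (s.1 i) * w (f (s.1 i))))
            + 1 / n2 * ∑ j, (-(γ1 * pip * (1 - f (s.2 j))) - (1 - γ1) * (1 - pip) * f (s.2 j))
                / (1 - γ1 - γ2) * (c (s.2 j) * w (f (s.2 j))))
            - (pip * ∫ x, c x * w (f x) * (1 - f x) ∂Pp
              - (1 - pip) * ∫ x, c x * w (f x) * f x ∂Pm)|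
          ≤ (sSup ((fun v : ℝ =>
                |((1 - γ2) * pip * (1 - v) + γ2 * (1 - pip) * v) / (1 - γ1 - γ2)|)
                  '' Set.Icc (0:ℝ) 1))
              * Real.sqrt (2 * Real.log (4 * (C.card : ℝ) * (W.card : ℝ) / δ) / n1)
            + (sSup ((fun v : ℝ =>
                |(-(γ1 * pip * (1 - v)) - (1 - γ1) * (1 - pip) * v) / (1 - γ1 - γ2)|)
                  '' Set.Icc (0:ℝ) 1))
              * Real.sqrt (2 * Real.log (4 * (C.card : ℝ) * (W.card : ℝ) / δ) / n2) } := by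
  classical
  obtain ⟨hδ0, hδ1⟩ := hδ
  obtain ⟨hp0, hp1⟩ := hpi
  obtain ⟨hg10, hg11⟩ := hγ1
  obtain ⟨hg20, hg21⟩ := hγ2
  have hn1R : (0:ℝ) < n1 := by exact_mod_cast hn1
  have hn2R : (0:ℝ) < n2 := by exact_mod_cast hn2
  -- abbreviations appearing in the goal
  set L : ℝ := Real.log (4 * (C.card : ℝ) * (W.card : ℝ) / δ) with hLdef
  set A1 : ℝ := sSup ((fun v : ℝ =>
      |((1 - γ2) * pip * (1 - v) + γ2 * (1 - pip) * v) / (1 - γ1 - γ2)|)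
        '' Set.Icc (0:ℝ) 1) with hA1def
  set A2 : ℝ := sSup ((fun v : ℝ =>
      |(-(γ1 * pip * (1 - v)) - (1 - γ1) * (1 - pip) * v) / (1 - γ1 - γ2)|)
        '' Set.Icc (0:ℝ) 1) with hA2def
  set μ1 : Measure X := ENNReal.ofReal (1 - γ1) • Pp + ENNReal.ofReal γ1 • Pm with hμ1def
  set μ2 : Measure X := ENNReal.ofReal γ2 • Pp + ENNReal.ofReal (1 - γ2) • Pm with hμ2def
  haveI hP1 : IsProbabilityMeasure μ1 := by
    constructor
    rw [hμ1def, Measure.add_apply, Measure.smul_apply, Measure.smul_apply, measure_univ,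
      measure_univ, smul_eq_mul, smul_eq_mul, mul_one, mul_one,
      ← ENNReal.ofReal_add (by linarith) (by linarith)]
    norm_num
  haveI hP2 : IsProbabilityMeasure μ2 := by
    constructor
    rw [hμ2def, Measure.add_apply, Measure.smul_apply, Measure.smul_apply, measure_univ,
      measure_univ, smul_eq_mul, smul_eq_mul, mul_one, mul_one,
      ← ENNReal.ofReal_add (by linarith) (by linarith)]
    norm_num
  -- numeric facts
  have hcardC : (1:ℝ) ≤ C.card := by exact_mod_cast hCne.card_pos
  have hcardW : (1:ℝ) ≤ W.card := by exact_mod_cast hWne.card_pos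
  set N : ℝ := (C.card : ℝ) * (W.card : ℝ) with hNdef
  have hN1 : 1 ≤ N := by rw [hNdef]; nlinarith
  have hN0 : 0 < N := lt_of_lt_of_le one_pos hN1
  have harg : (0:ℝ) < 4 * (C.card : ℝ) * (W.card : ℝ) / δ := by positivity
  have hL0 : 0 ≤ L := by
    rw [hLdef]
    apply Real.log_nonneg
    rw [le_div_iff₀ hδ0]
    nlinarith
  have hexpL : Real.exp (-L) = δ / (4 * N) := by
    rw [hLdef, Real.exp_neg, Real.exp_log harg, inv_div, hNdef]
    congr 1
    ring
  -- sSup facts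
  have hcont1 : Continuous (fun v : ℝ =>
      |((1 - γ2) * pip * (1 - v) + γ2 * (1 - pip) * v) / (1 - γ1 - γ2)|) := by
    apply Continuous.abs
    apply Continuous.div_const
    exact (continuous_const.mul (continuous_const.sub continuous_id)).add
      (continuous_const.mul continuous_id)
  have hcont2 : Continuous (fun v : ℝ =>
      |(-(γ1 * pip * (1 - v)) - (1 - γ1) * (1 - pip) * v) / (1 - γ1 - γ2)|) := by
    apply Continuous.abs
    apply Continuous.div_const
    exact ((continuous_const.mul (continuous_const.sub continuous_id)).neg).sub
      (continuous_const.mul continuous_id)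
  have hbdd1 : BddAbove ((fun v : ℝ =>
      |((1 - γ2) * pip * (1 - v) + γ2 * (1 - pip) * v) / (1 - γ1 - γ2)|)
        '' Set.Icc (0:ℝ) 1) := (isCompact_Icc.image hcont1).bddAbove
  have hbdd2 : BddAbove ((fun v : ℝ =>
      |(-(γ1 * pip * (1 - v)) - (1 - γ1) * (1 - pip) * v) / (1 - γ1 - γ2)|)
        '' Set.Icc (0:ℝ) 1) := (isCompact_Icc.image hcont2).bddAbove
  have hle1 : ∀ v ∈ Set.Icc (0:ℝ) 1,
      |((1 - γ2) * pip * (1 - v) + γ2 * (1 - pip) * v) / (1 - γ1 - γ2)| ≤ A1 := by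
    intro v hv
    rw [hA1def]
    exact le_csSup hbdd1 (Set.mem_image_of_mem _ hv)
  have hle2 : ∀ v ∈ Set.Icc (0:ℝ) 1,
      |(-(γ1 * pip * (1 - v)) - (1 - γ1) * (1 - pip) * v) / (1 - γ1 - γ2)| ≤ A2 := by
    intro v hv
    rw [hA2def]
    exact le_csSup hbdd2 (Set.mem_image_of_mem _ hv)
  have hA1nn : 0 ≤ A1 := le_trans (abs_nonneg _) (hle1 0 ⟨le_refl _, zero_le_one⟩)
  have hA2nn : 0 ≤ A2 := le_trans (abs_nonneg _) (hle2 0 ⟨le_refl _, zero_le_one⟩)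
  -- the integrand functions
  set g1 : (X → ℝ) → (ℝ → ℝ) → X → ℝ := fun c w x =>
    ((1 - γ2) * pip * (1 - f x) + γ2 * (1 - pip) * f x) / (1 - γ1 - γ2)
      * (c x * w (f x)) with hg1def
  set g2 : (X → ℝ) → (ℝ → ℝ) → X → ℝ := fun c w x =>
    (-(γ1 * pip * (1 - f x)) - (1 - γ1) * (1 - pip) * f x) / (1 - γ1 - γ2)
      * (c x * w (f x)) with hg2def
  have hgm1 : ∀ c ∈ C, ∀ w ∈ W, Measurable (g1 c w) := by
    intro c hc w hw
    simp only [hg1def]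
    exact (((measurable_const.mul (measurable_const.sub hf)).add
      (measurable_const.mul hf)).div_const _).mul ((hC c hc).1.mul ((hW w hw).1.comp hf))
  have hgm2 : ∀ c ∈ C, ∀ w ∈ W, Measurable (g2 c w) := by
    intro c hc w hw
    simp only [hg2def]
    exact (((measurable_const.mul (measurable_const.sub hf)).neg.sub
      (measurable_const.mul hf)).div_const _).mul ((hC c hc).1.mul ((hW w hw).1.comp hf))
  have hcw1 : ∀ c ∈ C, ∀ w ∈ W, ∀ x : X, |c x * w (f x)| ≤ 1 := by
    intro c hc w hw x
    have hcx := (hC c hc).2 x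
    have hwx := (hW w hw).2 (f x) (hf01 x)
    rw [abs_mul]
    calc |c x| * |w (f x)| ≤ 1 * 1 := by
          apply mul_le_mul (abs_le.2 ⟨hcx.1, hcx.2⟩) (abs_le.2 ⟨hwx.1, hwx.2⟩)
            (abs_nonneg _) zero_le_one
    _ = 1 := mul_one 1
  have hgb1 : ∀ c ∈ C, ∀ w ∈ W, ∀ x, |g1 c w x| ≤ A1 := by
    intro c hc w hw x
    simp only [hg1def]
    rw [abs_mul]
    calc _ ≤ A1 * 1 := mul_le_mul (hle1 (f x) (hf01 x)) (hcw1 c hc w hw x) (abs_nonneg _) hA1nn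
    _ = A1 := mul_one _
  have hgb2 : ∀ c ∈ C, ∀ w ∈ W, ∀ x, |g2 c w x| ≤ A2 := by
    intro c hc w hw x
    simp only [hg2def]
    rw [abs_mul]
    calc _ ≤ A2 * 1 := mul_le_mul (hle2 (f x) (hf01 x)) (hcw1 c hc w hw x) (abs_nonneg _) hA2nn
    _ = A2 := mul_one _
  -- the population identity
  have hmean : ∀ c ∈ C, ∀ w ∈ W,
      (∫ x, g1 c w x ∂μ1) + (∫ x, g2 c w x ∂μ2)
        = pip * ∫ x, c x * w (f x) * (1 - f x) ∂Pp
          - (1 - pip) * ∫ x, c x * w (f x) * f x ∂Pm := by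
    intro c hc w hw
    have i1p : Integrable (g1 c w) Pp := integrable_of_bounded (hgm1 c hc w hw) (hgb1 c hc w hw)
    have i1m : Integrable (g1 c w) Pm := integrable_of_bounded (hgm1 c hc w hw) (hgb1 c hc w hw)
    have i2p : Integrable (g2 c w) Pp := integrable_of_bounded (hgm2 c hc w hw) (hgb2 c hc w hw)
    have i2m : Integrable (g2 c w) Pm := integrable_of_bounded (hgm2 c hc w hw) (hgb2 c hc w hw)
    rw [hμ1def, hμ2def,
      mix_integral Pp Pm (by linarith) hg10 (hgm1 c hc w hw) (hgb1 c hc w hw),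
      mix_integral Pp Pm hg20 (by linarith) (hgm2 c hc w hw) (hgb2 c hc w hw)]
    have ePp : (1 - γ1) * ∫ x, g1 c w x ∂Pp + γ2 * ∫ x, g2 c w x ∂Pp
        = pip * ∫ x, c x * w (f x) * (1 - f x) ∂Pp := by
      rw [← integral_const_mul, ← integral_const_mul, ← integral_const_mul,
        ← integral_add (i1p.const_mul _) (i2p.const_mul _)]
      apply integral_congr_ae
      refine Filter.Eventually.of_forall fun x => ?_
      simp only [hg1def, hg2def]
      field_simp
      ring
    have ePm : γ1 * ∫ x, g1 c w x ∂Pm + (1 - γ2) * ∫ x, g2 c w x ∂Pm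
        = -((1 - pip) * ∫ x, c x * w (f x) * f x ∂Pm) := by
      rw [← integral_const_mul, ← integral_const_mul, ← integral_const_mul, ← integral_neg,
        ← integral_add (i1m.const_mul _) (i2m.const_mul _)]
      apply integral_congr_ae
      refine Filter.Eventually.of_forall fun x => ?_
      simp only [hg1def, hg2def]
      field_simp
      ring
    linarith
  -- deviation bounds for the bad events
  set K : ENNReal := ENNReal.ofReal (δ / (4 * N)) with hKdef
  set Bad1 : (X → ℝ) → (ℝ → ℝ) → Set (Fin n1 → X) := fun c w =>
    {u | A1 * Real.sqrt (2 * L / n1) < |(1 / n1) * ∑ i, g1 c w (u i) - ∫ x, g1 c w x ∂μ1|}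
    with hBad1def
  set Bad2 : (X → ℝ) → (ℝ → ℝ) → Set (Fin n2 → X) := fun c w =>
    {u | A2 * Real.sqrt (2 * L / n2) < |(1 / n2) * ∑ i, g2 c w (u i) - ∫ x, g2 c w x ∂μ2|}
    with hBad2def
  have hBad1meas : ∀ c ∈ C, ∀ w ∈ W, MeasurableSet (Bad1 c w) := by
    intro c hc w hw
    simp only [hBad1def]
    apply measurableSet_lt measurable_const
    apply Measurable.abs
    apply Measurable.sub _ measurable_const
    exact (Finset.measurable_sum _ fun i _ =>
      (hgm1 c hc w hw).comp (measurable_pi_apply i)).const_mul _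
  have hBad2meas : ∀ c ∈ C, ∀ w ∈ W, MeasurableSet (Bad2 c w) := by
    intro c hc w hw
    simp only [hBad2def]
    apply measurableSet_lt measurable_const
    apply Measurable.abs
    apply Measurable.sub _ measurable_const
    exact (Finset.measurable_sum _ fun i _ =>
      (hgm2 c hc w hw).comp (measurable_pi_apply i)).const_mul _
  have hBad1bd : ∀ c ∈ C, ∀ w ∈ W,
      (Measure.pi fun _ : Fin n1 => μ1) (Bad1 c w) ≤ K + K := by
    intro c hc w hw
    simp only [hBad1def, hKdef]
    exact sample_bound μ1 (hgm1 c hc w hw) hA1nn (hgb1 c hc w hw) n1 hn1 hL0 hexpL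
  have hBad2bd : ∀ c ∈ C, ∀ w ∈ W,
      (Measure.pi fun _ : Fin n2 => μ2) (Bad2 c w) ≤ K + K := by
    intro c hc w hw
    simp only [hBad2def, hKdef]
    exact sample_bound μ2 (hgm2 c hc w hw) hA2nn (hgb2 c hc w hw) n2 hn2 hL0 hexpL
  -- the product measure and the union bound
  set P : Measure ((Fin n1 → X) × (Fin n2 → X)) :=
    (Measure.pi fun _ : Fin n1 => μ1).prod (Measure.pi fun _ : Fin n2 => μ2) with hPdef
  haveI : IsProbabilityMeasure P := by rw [hPdef]; infer_instance
  set U : Set ((Fin n1 → X) × (Fin n2 → X)) :=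
    ⋃ c ∈ C, ⋃ w ∈ W, (Prod.fst ⁻¹' Bad1 c w ∪ Prod.snd ⁻¹' Bad2 c w) with hUdef
  have hUmeas : MeasurableSet U := by
    rw [hUdef]
    refine Set.Finite.measurableSet_biUnion C.finite_toSet fun c hc => ?_
    refine Set.Finite.measurableSet_biUnion W.finite_toSet fun w hw => ?_
    exact ((hBad1meas c hc w hw).preimage measurable_fst).union
      ((hBad2meas c hc w hw).preimage measurable_snd)
  have hU : P U ≤ ENNReal.ofReal δ := by
    rw [hUdef]
    calc P (⋃ c ∈ C, ⋃ w ∈ W, (Prod.fst ⁻¹' Bad1 c w ∪ Prod.snd ⁻¹' Bad2 c w))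
        ≤ ∑ c ∈ C, P (⋃ w ∈ W, (Prod.fst ⁻¹' Bad1 c w ∪ Prod.snd ⁻¹' Bad2 c w)) :=
          measure_biUnion_finset_le C _
    _ ≤ ∑ c ∈ C, ∑ w ∈ W, P (Prod.fst ⁻¹' Bad1 c w ∪ Prod.snd ⁻¹' Bad2 c w) :=
          Finset.sum_le_sum fun c _ => measure_biUnion_finset_le W _
    _ ≤ ∑ _c ∈ C, ∑ _w ∈ W, ((K + K) + (K + K)) := by
          apply Finset.sum_le_sum; intro c hc
          apply Finset.sum_le_sum; intro w hw
          refine (measure_union_le _ _).trans (add_le_add ?_ ?_)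
          · have he : Prod.fst ⁻¹' Bad1 c w
                = (Bad1 c w) ×ˢ (Set.univ : Set (Fin n2 → X)) := (Set.prod_univ).symm
            rw [hPdef, he, Measure.prod_prod, measure_univ, mul_one]
            exact hBad1bd c hc w hw
          · have he : Prod.snd ⁻¹' Bad2 c w
                = (Set.univ : Set (Fin n1 → X)) ×ˢ (Bad2 c w) := (Set.univ_prod).symm
            rw [hPdef, he, Measure.prod_prod, measure_univ, one_mul]
            exact hBad2bd c hc w hw
    _ = (C.card : ENNReal) * ((W.card : ENNReal) * ((K + K) + (K + K))) := by
          rw [Finset.sum_const, Finset.sum_const, nsmul_eq_mul, nsmul_eq_mul]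
    _ ≤ ENNReal.ofReal δ := by
          have hdN : (0:ℝ) ≤ δ / (4 * N) := div_nonneg hδ0.le (by linarith)
          have hquad : (K + K) + (K + K) = ENNReal.ofReal (δ / N) := by
            have hNne : N ≠ 0 := by linarith
            rw [hKdef, ← ENNReal.ofReal_add hdN hdN,
              ← ENNReal.ofReal_add (add_nonneg hdN hdN) (add_nonneg hdN hdN)]
            congr 1
            simp only [← add_div]
            rw [div_eq_div_iff (by linarith : (4*N:ℝ) ≠ 0) (by linarith : (N:ℝ) ≠ 0)]
            ring
          rw [hquad, ← ENNReal.ofReal_natCast C.card, ← ENNReal.ofReal_natCast W.card,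
            ← ENNReal.ofReal_mul (Nat.cast_nonneg _),
            ← ENNReal.ofReal_mul (Nat.cast_nonneg _)]
          apply ENNReal.ofReal_le_ofReal
          have hNne : N ≠ 0 := by linarith
          calc (C.card : ℝ) * ((W.card : ℝ) * (δ / N)) = N * (δ / N) := by rw [hNdef]; ring
          _ = δ := by field_simp
          _ ≤ δ := le_refl δ
  -- complement of the bad event is contained in the target event
  have hsubT : Uᶜ ⊆ {s : (Fin n1 → X) × (Fin n2 → X) |
      ∀ c ∈ C, ∀ w ∈ W,
        |((1 / n1 * ∑ i, g1 c w (s.1 i)) + 1 / n2 * ∑ j, g2 c w (s.2 j))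
          - (pip * ∫ x, c x * w (f x) * (1 - f x) ∂Pp
            - (1 - pip) * ∫ x, c x * w (f x) * f x ∂Pm)|
        ≤ A1 * Real.sqrt (2 * L / n1) + A2 * Real.sqrt (2 * L / n2)} := by
    intro s hs
    rw [hUdef] at hs
    simp only [Set.mem_compl_iff, Set.mem_iUnion, not_exists, Set.mem_union, not_or] at hs
    intro c hc w hw
    obtain ⟨h1, h2⟩ := hs c hc w hw
    rw [Set.mem_preimage] at h1 h2
    simp only [hBad1def, Set.mem_setOf_eq, not_lt] at h1
    simp only [hBad2def, Set.mem_setOf_eq, not_lt] at h2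
    rw [← hmean c hc w hw]
    calc |((1 / n1 * ∑ i, g1 c w (s.1 i)) + 1 / n2 * ∑ j, g2 c w (s.2 j))
          - ((∫ x, g1 c w x ∂μ1) + (∫ x, g2 c w x ∂μ2))|
        = |((1 / n1 * ∑ i, g1 c w (s.1 i)) - ∫ x, g1 c w x ∂μ1)
          + ((1 / n2 * ∑ j, g2 c w (s.2 j)) - ∫ x, g2 c w x ∂μ2)| := by
            congr 1
            ring
    _ ≤ |(1 / n1 * ∑ i, g1 c w (s.1 i)) - ∫ x, g1 c w x ∂μ1|
          + |(1 / n2 * ∑ j, g2 c w (s.2 j)) - ∫ x, g2 c w x ∂μ2| := abs_add_le _ _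
    _ ≤ _ := add_le_add h1 h2
  -- put everything together
  calc ENNReal.ofReal (1 - δ) = 1 - ENNReal.ofReal δ := by
        rw [ENNReal.ofReal_sub _ hδ0.le, ENNReal.ofReal_one]
  _ ≤ 1 - P U := tsub_le_tsub_left hU 1
  _ = P Uᶜ := (prob_compl_eq_one_sub hUmeas).symm
  _ ≤ _ := by
        rw [hPdef]
        exact measure_mono hsubT
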